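/- For every real number d with 0 < d ≤ e, the second iterate F(x) = exp(−d·exp(−d·x)) has exactly one fixed point in the interval [0, 1], namely the unique fixed point of the map x ↦ exp(−d·x). -/

import Mathlib

open Real Set

private lemma hasDerivAt_tsublog (t : ℝ) (ht : t ≠ 0) :
    HasDerivAt (fun s : ℝ => s - Real.log s) (1 - 1/t) t := by
  have h := (hasDerivAt_id t).sub (Real.hasDerivAt_log ht)
  rw [one_div]; exact h

private lemma fmono : StrictMonoOn (fun t : ℝ => t - Real.log t) (Set.Ici 1) := by
  apply strictMonoOn_of_deriv_pos (convex_Ici 1)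
  · exact (continuous_id.continuousOn).sub
      (Real.continuousOn_log.mono (by intro x hx; simp at hx ⊢; intro h; simp [h] at hx; linarith))
  · intro x hx
    rw [interior_Ici] at hx
    have h1 : (1:ℝ) < x := hx
    rw [(hasDerivAt_tsublog x (by linarith)).deriv]
    have : 1/x < 1 := by rw [div_lt_one (by linarith)]; exact h1
    linarith

private lemma fanti : StrictAntiOn (fun t : ℝ => t - Real.log t) (Set.Ioc 0 1) := by
  apply strictAntiOn_of_deriv_neg (convex_Ioc 0 1)
  · exact (continuous_id.continuousOn).sub
      (Real.continuousOn_log.mono (by intro x hx; simp at hx ⊢; linarith [hx.1]))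
  · intro x hx
    rw [interior_Ioc] at hx
    obtain ⟨h0, h1⟩ := hx
    rw [(hasDerivAt_tsublog x (by linarith)).deriv]
    have : 1 < 1/x := by rw [lt_div_iff₀ h0]; linarith
    linarith

private lemma aux1 (t : ℝ) (h0 : 0 < t) (h1 : t < 1) :
    Real.exp t + Real.log (1 - t) < 1 := by
  have key : StrictAntiOn (fun s : ℝ => Real.exp s + Real.log (1 - s)) (Set.Icc 0 t) := by
    apply strictAntiOn_of_deriv_neg (convex_Icc 0 t)
    · apply Real.continuous_exp.continuousOn.add
      apply ContinuousOn.comp Real.continuousOn_log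
        ((continuous_const.sub continuous_id).continuousOn)
      intro x hx
      simp only [Set.mem_Icc] at hx
      simp only [Set.mem_compl_iff, Set.mem_singleton_iff]
      intro h
      simp only [Pi.sub_apply, id_eq] at h
      have : x = 1 := by linarith [sub_eq_zero.mp h]
      linarith [hx.2]
    · intro x hx
      rw [interior_Icc] at hx
      obtain ⟨hx0, hxt⟩ := hx
      have hx1 : x < 1 := lt_trans hxt h1
      have hne : (1:ℝ) - x ≠ 0 := by linarith
      have hd1 : HasDerivAt (fun s : ℝ => Real.log (1 - s)) ((1 - x)⁻¹ * (-1)) x := by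
        have h2 : HasDerivAt (fun s : ℝ => 1 - s) (-1) x := by
          simpa using (hasDerivAt_id x).const_sub 1
        exact (Real.hasDerivAt_log hne).comp x h2
      have hD : HasDerivAt (fun s : ℝ => Real.exp s + Real.log (1 - s))
          (Real.exp x + (1 - x)⁻¹ * (-1)) x := (Real.hasDerivAt_exp x).add hd1
      rw [hD.deriv]
      have hlt : Real.exp x * (1 - x) < 1 := by
        have h3 : -x + 1 < Real.exp (-x) := Real.add_one_lt_exp (by linarith)
        have h4 : Real.exp x * (1 - x) < Real.exp x * Real.exp (-x) := by
          apply mul_lt_mul_of_pos_left _ (Real.exp_pos x)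
          linarith
        rwa [← Real.exp_add, add_neg_cancel, Real.exp_zero] at h4
      have hpos : 0 < 1 - x := by linarith
      have : Real.exp x < (1 - x)⁻¹ := by
        rw [lt_inv_comm₀ (Real.exp_pos x) hpos] at *
        · rw [inv_eq_one_div, lt_div_iff₀ (Real.exp_pos x)]
          linarith [hlt]
      nlinarith [this, hpos]
  have := key (Set.left_mem_Icc.mpr h0.le) (Set.right_mem_Icc.mpr h0.le) h0
  simpa using this

private lemma no2cycle (d a b : ℝ) (hd : 0 < d) (hde : d ≤ Real.exp 1)
    (hab : a < b) (h1 : Real.exp (-d * a) = b) (h2 : Real.exp (-d * b) = a) : False := by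
  have ha : 0 < a := h2 ▸ Real.exp_pos _
  have hb : 0 < b := h1 ▸ Real.exp_pos _
  have hla : Real.log a = -d * b := by rw [← h2, Real.log_exp]
  have hlb : Real.log b = -d * a := by rw [← h1, Real.log_exp]
  set u := d * a with hu
  set v := d * b with hv
  have hu0 : 0 < u := mul_pos hd ha
  have hv0 : 0 < v := mul_pos hd hb
  have huv : u < v := by apply mul_lt_mul_of_pos_left hab hd
  have hlu : Real.log u = Real.log d - v := by
    rw [hu, Real.log_mul hd.ne' ha.ne', hla]; ring
  have hlv : Real.log v = Real.log d - u := by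
    rw [hv, Real.log_mul hd.ne' hb.ne', hlb]; ring
  have hfeq : u - Real.log u = v - Real.log v := by rw [hlu, hlv]; ring
  -- u < 1 < v
  have hu1 : u < 1 := by
    by_contra h
    push_neg at h
    have := fmono (Set.mem_Ici.mpr h) (Set.mem_Ici.mpr (le_trans h huv.le)) huv
    simp only at this
    linarith
  have hv1 : 1 < v := by
    by_contra h
    push_neg at h
    have := fanti (Set.mem_Ioc.mpr ⟨hu0, le_trans huv.le h⟩) (Set.mem_Ioc.mpr ⟨hv0, h⟩) huv
    simp only at this
    linarith
  -- log d ≤ 1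
  have hld : Real.log d ≤ 1 := by
    calc Real.log d ≤ Real.log (Real.exp 1) := Real.log_le_log hd hde
    _ = 1 := Real.log_exp 1
  -- key inequality : exp (1-u) + log u < 1
  have hkey : Real.exp (1 - u) + Real.log u < 1 := by
    have := aux1 (1 - u) (by linarith) (by linarith)
    have heq : (1 : ℝ) - (1 - u) = u := by ring
    rwa [heq] at this
  -- exp (1-u) < v via fmono
  have hEv : Real.exp (1 - u) < v := by
    have hE1 : (1:ℝ) ≤ Real.exp (1 - u) := Real.one_le_exp (by linarith)
    have hfE : Real.exp (1 - u) - Real.log (Real.exp (1 - u)) < v - Real.log v := by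
      rw [Real.log_exp]
      calc Real.exp (1 - u) - (1 - u) < u - Real.log u := by linarith
      _ = v - Real.log v := hfeq
    by_contra h
    push_neg at h
    have := fmono.le_iff_le (Set.mem_Ici.mpr hv1.le) (Set.mem_Ici.mpr hE1)
    have h' := this.mpr h
    linarith
  have : 1 - u < Real.log v := by
    calc 1 - u = Real.log (Real.exp (1 - u)) := (Real.log_exp _).symm
    _ < Real.log v := Real.log_lt_log (Real.exp_pos _) hEv
  linarith [hlv ▸ this]

theorem stmt5 (d : ℝ) (hd : 0 < d) (hde : d ≤ Real.exp 1) :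
    ∀ x : ℝ, Real.exp (-d * x) = x →
      x ∈ Set.Icc (0 : ℝ) 1 ∧
      Real.exp (-d * Real.exp (-d * x)) = x ∧
      ∀ y ∈ Set.Icc (0 : ℝ) 1, Real.exp (-d * Real.exp (-d * y)) = y → y = x := by
  intro x hx
  have hx0 : 0 < x := hx ▸ Real.exp_pos _
  have hx1 : x < 1 := by
    rw [← hx]
    have : -d * x < 0 := by nlinarith
    calc Real.exp (-d * x) < Real.exp 0 := Real.exp_lt_exp.mpr this
    _ = 1 := Real.exp_zero
  refine ⟨⟨hx0.le, hx1.le⟩, by rw [hx, hx], ?_⟩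
  intro y _ hFy
  set z := Real.exp (-d * y) with hz
  have hzy : Real.exp (-d * z) = y := hFy
  have hy0 : 0 < y := hzy ▸ Real.exp_pos _
  rcases lt_trichotomy y z with h | h | h
  · exact absurd (no2cycle d y z hd hde h hz.symm hzy) (fun hf => hf.elim)
  · -- y = z: y is a fixed point of g, so y = x by monotonicity
    have hyfix : Real.exp (-d * y) = y := by rw [← hz, h]
    rcases lt_trichotomy y x with h' | h' | h'
    · exfalso
      have : Real.exp (-d * x) < Real.exp (-d * y) := by
        apply Real.exp_lt_exp.mpr; nlinarith
      rw [hx, hyfix] at this; linarith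
    · exact h'
    · exfalso
      have : Real.exp (-d * y) < Real.exp (-d * x) := by
        apply Real.exp_lt_exp.mpr; nlinarith
      rw [hx, hyfix] at this; linarith
  · exact absurd (no2cycle d z y hd hde h hzy hz.symm) (fun hf => hf.elim)
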